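/- Let E be a Borel equivalence relation on a standard Borel space with at least two equivalence classes. Then the ℤ-jump E^{[ℤ]} is weakly absorbing: E^{[ℤ]} has perfectly many classes, and ((E^{[ℤ]})^{<ω})^+ is Borel reducible to (E^{[ℤ]})^+. -/

import Mathlib

/-- The Γ-jump of an equivalence relation `E` on `X`. -/
def GammaJump (Γ : Type*) [Group Γ] {X : Type*} (E : X → X → Prop) :
    (Γ → X) → (Γ → X) → Prop :=
  fun x y => ∃ γ : Γ, ∀ α : Γ, E (x (γ⁻¹ * α)) (y α)

/-- Borel reducibility of binary relations on measurable spaces. -/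
def BorelReducible {X Y : Type*} [MeasurableSpace X] [MeasurableSpace Y]
    (E : X → X → Prop) (F : Y → Y → Prop) : Prop :=
  ∃ f : X → Y, Measurable f ∧ ∀ x x', E x x' ↔ F (f x) (f x')

/-- The Friedman–Stanley jump `E⁺` on `X^ω`: two sequences are equivalent iff they
enumerate the same set of `E`-classes. -/
def FSJump {X : Type*} (E : X → X → Prop) : (ℕ → X) → (ℕ → X) → Prop :=
  fun x y => Set.range (fun n => {z | E (x n) z}) = Set.range (fun n => {z | E (y n) z})

/-- `E^{<ω}`: the equivalence relation on finite sequences from `X`, where two finite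
sequences are equivalent iff they have the same length and are coordinatewise
`E`-equivalent. -/
def FinSeqRel {X : Type*} (E : X → X → Prop) :
    (Σ n : ℕ, Fin n → X) → (Σ n : ℕ, Fin n → X) → Prop :=
  fun x y => ∃ h : x.1 = y.1, ∀ i : Fin x.1, E (x.2 i) (y.2 (Fin.cast h i))

/-- `E` has perfectly many classes: there is a Borel injection of `2^ω` into `X` with
pairwise `E`-inequivalent values. -/
def PerfectlyManyClasses {X : Type*} [MeasurableSpace X] (E : X → X → Prop) : Prop :=
  ∃ f : (ℕ → Bool) → X, Measurable f ∧ Function.Injective f ∧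
    ∀ a b, a ≠ b → ¬ E (f a) (f b)

namespace ZJumpAux

open Multiplicative

variable {X : Type*}

/-! ### Generic equivalence facts -/

theorem gammaJump_equiv {Γ : Type*} [Group Γ] {E : X → X → Prop} (hE : Equivalence E) :
    Equivalence (GammaJump Γ E) := by
  constructor
  · intro x
    exact ⟨1, fun α => by simpa using hE.refl (x α)⟩
  · rintro x y ⟨γ, h⟩
    refine ⟨γ⁻¹, fun α => ?_⟩
    have := h (γ * α)
    simpa [mul_assoc] using hE.symm this
  · rintro x y z ⟨γ, h⟩ ⟨δ, h'⟩
    refine ⟨δ * γ, fun α => ?_⟩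
    have h1 := h (δ⁻¹ * α)
    have h2 := h' α
    have : (δ * γ)⁻¹ * α = γ⁻¹ * (δ⁻¹ * α) := by group
    rw [this]
    exact hE.trans h1 h2

theorem finSeqRel_equiv {E : (Multiplicative ℤ → X) → (Multiplicative ℤ → X) → Prop}
    (hE : Equivalence E) : Equivalence (FinSeqRel E) := by
  constructor
  · rintro ⟨k, u⟩
    exact ⟨rfl, fun i => hE.refl _⟩
  · rintro ⟨k, u⟩ ⟨k', v⟩ ⟨h, hi⟩
    cases h
    exact ⟨rfl, fun i => hE.symm (hi i)⟩
  · rintro ⟨k, u⟩ ⟨k', v⟩ ⟨k'', w⟩ ⟨h, hi⟩ ⟨h', hi'⟩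
    cases h; cases h'
    exact ⟨rfl, fun i => hE.trans (hi i) (hi' i)⟩

theorem class_eq_of_rel {Y : Type*} {F : Y → Y → Prop} (hF : Equivalence F) {u v : Y}
    (huv : F u v) : {z | F u z} = {z | F v z} := by
  ext z
  exact ⟨fun h => hF.trans (hF.symm huv) h, fun h => hF.trans huv h⟩

theorem rel_of_class_eq {Y : Type*} {F : Y → Y → Prop} (hF : Equivalence F) {u v : Y}
    (h : {z | F u z} = {z | F v z}) : F u v := by
  have : v ∈ {z | F v z} := hF.refl v
  rw [← h] at this
  exact this

/-- Membership criterion for `FSJump` via class equalities. -/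
theorem fsJump_iff {Y : Type*} {F : Y → Y → Prop} (x y : ℕ → Y) :
    FSJump F x y ↔ ((∀ n, ∃ m, {z | F (x n) z} = {z | F (y m) z}) ∧
      (∀ m, ∃ n, {z | F (y m) z} = {z | F (x n) z})) := by
  constructor
  · intro h
    constructor
    · intro n
      have : {z | F (x n) z} ∈ Set.range (fun m => {z | F (y m) z}) := by
        rw [← h]; exact ⟨n, rfl⟩
      obtain ⟨m, hm⟩ := this
      exact ⟨m, hm.symm⟩
    · intro m
      have : {z | F (y m) z} ∈ Set.range (fun n => {z | F (x n) z}) := by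
        rw [h]; exact ⟨m, rfl⟩
      obtain ⟨n, hn⟩ := this
      exact ⟨n, hn.symm⟩
  · rintro ⟨h1, h2⟩
    apply Set.eq_of_subset_of_subset
    · rintro S ⟨n, rfl⟩
      obtain ⟨m, hm⟩ := h1 n
      exact ⟨m, hm.symm⟩
    · rintro S ⟨m, rfl⟩
      obtain ⟨n, hn⟩ := h2 m
      exact ⟨n, hn.symm⟩

/-- A function out of a sigma type over `ℕ` is measurable if each component is. -/
theorem measurable_of_sigma {β : ℕ → Type*} [∀ k, MeasurableSpace (β k)] {Y : Type*}
    [MeasurableSpace Y] {F : (Σ k, β k) → Y} (h : ∀ k, Measurable fun u => F ⟨k, u⟩) :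
    Measurable F := fun _S hS => MeasurableSpace.measurableSet_iInf.2 fun k => h k hS

section Main

variable (E : X → X → Prop) (a b : X)

/-! ### Part 1: perfectly many classes -/

/-- The positions carrying the value `b` in the sequence coding `s`. -/
def Bset (s : ℕ → Bool) (n : ℤ) : Prop := n = 0 ∨ (0 < n ∧ s (n - 1).toNat = true)

instance (s : ℕ → Bool) (n : ℤ) : Decidable (Bset s n) := by unfold Bset; infer_instance

def bseqZ (s : ℕ → Bool) (n : ℤ) : X := if Bset s n then b else a

def bseq (s : ℕ → Bool) : Multiplicative ℤ → X := fun α => bseqZ a b s (toAdd α)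

variable {E a b}

theorem bset_nonneg {s : ℕ → Bool} {n : ℤ} (h : Bset s n) : 0 ≤ n := by
  rcases h with h | ⟨h, _⟩ <;> omega

theorem part1 [MeasurableSpace X] (hE : Equivalence E) (hab : ¬ E a b) :
    PerfectlyManyClasses (GammaJump (Multiplicative ℤ) E) := by
  have hba : ¬ E b a := fun h => hab (hE.symm h)
  have hne : a ≠ b := fun h => hab (h ▸ hE.refl a)
  refine ⟨bseq a b, ?_, ?_, ?_⟩
  · -- measurability
    apply measurable_pi_lambda
    intro α
    show Measurable fun s : ℕ → Bool => bseqZ a b s (toAdd α)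
    unfold bseqZ Bset
    by_cases h0 : (toAdd α : ℤ) = 0
    · simp [h0]
    · by_cases h1 : (0:ℤ) < toAdd α
      · have : (fun s : ℕ → Bool => if toAdd α = 0 ∨ 0 < toAdd α ∧ s (toAdd α - 1).toNat = true
            then b else a) =
            (fun c : Bool => if c then b else a) ∘ (fun s => s (toAdd α - 1).toNat) := by
          funext s
          by_cases hs : s (toAdd α - 1).toNat = true <;> simp [h0, h1, hs]
        rw [this]
        exact measurable_from_top.comp (measurable_pi_apply _)
      · simp [h0, h1]
  · -- injective
    intro s t hst
    funext j
    have := congrFun hst (ofAdd ((j : ℤ) + 1))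
    have hb : Bset s ((j:ℤ)+1) ↔ s j = true := by
      unfold Bset
      constructor
      · rintro (h | ⟨_, h⟩)
        · omega
        · simpa using h
      · intro h
        refine Or.inr ⟨by omega, by simpa using h⟩
    have hb' : Bset t ((j:ℤ)+1) ↔ t j = true := by
      unfold Bset
      constructor
      · rintro (h | ⟨_, h⟩)
        · omega
        · simpa using h
      · intro h
        refine Or.inr ⟨by omega, by simpa using h⟩
    simp only [bseq, bseqZ, toAdd_ofAdd] at this
    by_cases hs : s j = true <;> by_cases ht : t j = true <;>
      simp [hs, ht, ← hb, ← hb'] at this ⊢ <;> simp_all [Bset]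
  · -- pairwise inequivalent
    intro s t hst hJ
    apply hst
    obtain ⟨γ, h⟩ := hJ
    set g : ℤ := toAdd γ with hg
    have H : ∀ n : ℤ, E (bseqZ a b s (n - g)) (bseqZ a b t n) := by
      intro n
      have := h (ofAdd n)
      have harg : toAdd (γ⁻¹ * ofAdd n) = n - g := by
        simp [hg, sub_eq_neg_add]
      simpa [bseq, harg] using this
    have key : ∀ n : ℤ, Bset s (n - g) ↔ Bset t n := by
      intro n
      have := H n
      unfold bseqZ at this
      by_cases h1 : Bset s (n - g) <;> by_cases h2 : Bset t n <;>
        simp [h1, h2] at this ⊢ <;> tauto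
    have hg0 : g = 0 := by
      have h1 : Bset t 0 := Or.inl rfl
      have h2 : Bset s (0 - g) := (key 0).2 h1
      have h3 : Bset s 0 := Or.inl rfl
      have h4 : Bset t g := (key g).1 (by simpa using h3)
      have := bset_nonneg h2
      have := bset_nonneg h4
      omega
    funext j
    have := (key ((j:ℤ)+1))
    rw [hg0, sub_zero] at this
    have hb : Bset s ((j:ℤ)+1) ↔ s j = true := by
      unfold Bset
      constructor
      · rintro (h | ⟨_, h⟩)
        · omega
        · simpa using h
      · intro h
        exact Or.inr ⟨by omega, by simpa using h⟩
    have hb' : Bset t ((j:ℤ)+1) ↔ t j = true := by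
      unfold Bset
      constructor
      · rintro (h | ⟨_, h⟩)
        · omega
        · simpa using h
      · intro h
        exact Or.inr ⟨by omega, by simpa using h⟩
    by_cases hs : s j = true <;> by_cases ht : t j = true <;> simp_all

end Main


/-! ### Part 2: the code machinery -/

section Part2

open Multiplicative Encodable

variable (E : X → X → Prop) (a b : X)

/-- Shift of a bi-infinite sequence by `g`. -/
def sh (g : ℤ) (x : Multiplicative ℤ → X) : Multiplicative ℤ → X :=
  fun β => x (ofAdd (toAdd β - g))

/-- Shift each coordinate of a tuple by the corresponding entry of the list `l`. -/
def tshift (t : Σ k : ℕ, Fin k → Multiplicative ℤ → X) (l : List ℤ) :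
    Σ k : ℕ, Fin k → Multiplicative ℤ → X :=
  ⟨t.1, fun i => sh (l.getD i 0) (t.2 i)⟩

/-- The body (indexed by `ℤ`) of the code of a tuple. -/
def codeZ (k : ℕ) (u : Fin k → Multiplicative ℤ → X) (n : ℤ) : X :=
  if n < 0 then a
  else if n = 0 then b
  else if n ≤ (k : ℤ) then b
  else if n = (k : ℤ) + 1 then a
  else
    match Encodable.decode (α := Fin k × ℤ) (n - ((k : ℤ) + 2)).toNat with
    | some (i, q) => u i (ofAdd q)
    | none => a

/-- The code of a tuple as an element of `X^ℤ`. -/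
def codeFn (t : Σ k : ℕ, Fin k → Multiplicative ℤ → X) : Multiplicative ℤ → X :=
  fun α => codeZ a b t.1 t.2 (toAdd α)

/-- Pointwise (no-shift) coordinatewise `E`-equivalence of tuples. -/
def PtWise (t t' : Σ k : ℕ, Fin k → Multiplicative ℤ → X) : Prop :=
  ∃ h : t.1 = t'.1, ∀ (i : Fin t.1) (β : Multiplicative ℤ), E (t.2 i β) (t'.2 (Fin.cast h i) β)

variable {E a b}

theorem codeZ_neg {k : ℕ} {u : Fin k → Multiplicative ℤ → X} {n : ℤ} (h : n < 0) : codeZ a b k u n = a := by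
  simp [codeZ, h]

theorem codeZ_zero {k : ℕ} {u : Fin k → Multiplicative ℤ → X} : codeZ a b k u 0 = b := by
  simp [codeZ]

theorem codeZ_mid {k : ℕ} {u : Fin k → Multiplicative ℤ → X} {n : ℤ} (h1 : 0 < n) (h2 : n ≤ (k : ℤ)) : codeZ a b k u n = b := by
  unfold codeZ
  rw [if_neg (by omega), if_neg (by omega), if_pos h2]

theorem codeZ_top {k : ℕ} {u : Fin k → Multiplicative ℤ → X} : codeZ a b k u ((k : ℤ) + 1) = a := by
  unfold codeZ
  rw [if_neg (by omega), if_neg (by omega), if_neg (by omega), if_pos rfl]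

theorem codeZ_data {k : ℕ} {u : Fin k → Multiplicative ℤ → X} (i : Fin k) (q : ℤ) :
    codeZ a b k u ((Encodable.encode (⟨i, q⟩ : Fin k × ℤ) : ℤ) + (k : ℤ) + 2) = u i (ofAdd q) := by
  unfold codeZ
  rw [if_neg (by omega), if_neg (by omega), if_neg (by omega), if_neg (by omega)]
  have h : (((Encodable.encode (⟨i, q⟩ : Fin k × ℤ) : ℤ) + (k : ℤ) + 2) - ((k : ℤ) + 2)).toNat
      = Encodable.encode (⟨i, q⟩ : Fin k × ℤ) := by omega
  rw [h, Encodable.encodek]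

/-- Rigidity: if two codes are `GammaJump`-equivalent then the shift is trivial and the
tuples are pointwise equivalent. -/
theorem rigid (hE : Equivalence E) (hab : ¬ E a b)
    {t t' : Σ k : ℕ, Fin k → Multiplicative ℤ → X}
    (h : GammaJump (Multiplicative ℤ) E (codeFn a b t) (codeFn a b t')) : PtWise E t t' := by
  obtain ⟨k, u⟩ := t
  obtain ⟨k', v⟩ := t'
  obtain ⟨γ, h⟩ := h
  set g : ℤ := toAdd γ with hg
  have H : ∀ n : ℤ, E (codeZ a b k u (n - g)) (codeZ a b k' v n) := by
    intro n
    have h1 := h (ofAdd n)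
    have harg : toAdd (γ⁻¹ * ofAdd n) = n - g := by
      rw [toAdd_mul, toAdd_inv, toAdd_ofAdd, ← hg]; ring
    simpa [codeFn, harg] using h1
  have hg0 : g = 0 := by
    by_contra hne
    rcases lt_or_gt_of_ne hne with hlt | hgt
    · have h1 := H g
      rw [sub_self, codeZ_zero, codeZ_neg hlt] at h1
      exact hab (hE.symm h1)
    · have h1 := H 0
      rw [zero_sub, codeZ_neg (by omega), codeZ_zero] at h1
      exact hab h1
  have H0 : ∀ n : ℤ, E (codeZ a b k u n) (codeZ a b k' v n) := by
    intro n
    have := H n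
    rwa [hg0, sub_zero] at this
  have hk : k = k' := by
    by_contra hk
    rcases Nat.lt_or_ge k k' with hlt | hge
    · have h1 := H0 ((k : ℤ) + 1)
      rw [codeZ_top, codeZ_mid (by omega) (by omega)] at h1
      exact hab h1
    · have hlt : k' < k := by omega
      have h1 := H0 ((k' : ℤ) + 1)
      rw [codeZ_top, codeZ_mid (by omega) (by omega)] at h1
      exact hab (hE.symm h1)
  cases hk
  refine ⟨rfl, fun i β => ?_⟩
  have h1 := H0 ((Encodable.encode (⟨i, toAdd β⟩ : Fin k × ℤ) : ℤ) + (k : ℤ) + 2)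
  rw [codeZ_data, codeZ_data] at h1
  simpa using h1

/-- Converse: pointwise equivalent tuples have `GammaJump`-equivalent codes. -/
theorem code_of_ptWise (hE : Equivalence E)
    {t t' : Σ k : ℕ, Fin k → Multiplicative ℤ → X} (hP : PtWise E t t') :
    GammaJump (Multiplicative ℤ) E (codeFn a b t) (codeFn a b t') := by
  obtain ⟨k, u⟩ := t
  obtain ⟨k', v⟩ := t'
  obtain ⟨hk, hi⟩ := hP
  cases hk
  refine ⟨1, fun α => ?_⟩
  rw [inv_one, one_mul]
  show E (codeZ a b k u (toAdd α)) (codeZ a b k v (toAdd α))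
  set n : ℤ := toAdd α with hn
  unfold codeZ
  split_ifs
  any_goals exact hE.refl _
  cases hd : Encodable.decode (α := Fin k × ℤ) ((n - ((k : ℤ) + 2)).toNat) with
  | none => exact hE.refl _
  | some p =>
    obtain ⟨i, q⟩ := p
    exact hi i (ofAdd q)

theorem getD_ofFn {k : ℕ} (f : Fin k → ℤ) (i : Fin k) : (List.ofFn f).getD i 0 = f i := by
  rw [List.getD_eq_getElem?_getD, List.getElem?_ofFn]
  rw [dif_pos i.isLt]
  simp

/-- If two tuples are `FinSeqRel`-equivalent, any shifted copy of the first is pointwise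
equivalent to some shifted copy of the second. -/
theorem shift_of_finSeqRel (hE : Equivalence E)
    {t t' : Σ k : ℕ, Fin k → Multiplicative ℤ → X}
    (hF : FinSeqRel (GammaJump (Multiplicative ℤ) E) t t') (l : List ℤ) :
    ∃ l' : List ℤ, PtWise E (tshift t l) (tshift t' l') := by
  obtain ⟨k, u⟩ := t
  obtain ⟨k', v⟩ := t'
  obtain ⟨hk, hi⟩ := hF
  cases hk
  choose γ hγ using hi
  refine ⟨List.ofFn (fun i : Fin k => l.getD i 0 - toAdd (γ i)), rfl, fun i β => ?_⟩
  show E (sh (l.getD i 0) (u i) β)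
    (sh ((List.ofFn (fun j : Fin k => l.getD j 0 - toAdd (γ j))).getD i 0) (v i) β)
  rw [getD_ofFn (fun j : Fin k => l.getD j 0 - toAdd (γ j)) i]
  have h1 := hγ i (ofAdd (toAdd β - (l.getD i 0 - toAdd (γ i))))
  have harg : (γ i)⁻¹ * ofAdd (toAdd β - (l.getD i 0 - toAdd (γ i)))
      = ofAdd (toAdd β - l.getD i 0) := by
    have : toAdd ((γ i)⁻¹ * ofAdd (toAdd β - (l.getD i 0 - toAdd (γ i))))
        = toAdd β - l.getD i 0 := by
      rw [toAdd_mul, toAdd_inv, toAdd_ofAdd]; ring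
    exact this
  rw [harg] at h1
  exact h1

/-- Conversely, pointwise equivalence of shifted copies yields `FinSeqRel`-equivalence. -/
theorem finSeqRel_of_shift (hE : Equivalence E)
    {t t' : Σ k : ℕ, Fin k → Multiplicative ℤ → X} {l l' : List ℤ}
    (hP : PtWise E (tshift t l) (tshift t' l')) :
    FinSeqRel (GammaJump (Multiplicative ℤ) E) t t' := by
  obtain ⟨k, u⟩ := t
  obtain ⟨k', v⟩ := t'
  obtain ⟨hk, hi⟩ := hP
  cases (hk : k = k')
  refine ⟨rfl, fun i => ?_⟩
  refine ⟨ofAdd (l.getD i 0 - l'.getD i 0), fun α => ?_⟩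
  have h1 := hi i (ofAdd (toAdd α + l'.getD i 0))
  show E (u i _) (v i α)
  have e1 : (ofAdd (toAdd α + l'.getD i 0)) = ofAdd (toAdd α + l'.getD i 0) := rfl
  have h2 : E (u i (ofAdd (toAdd α + l'.getD i 0 - l.getD i 0)))
      (v i (ofAdd (toAdd α + l'.getD i 0 - l'.getD i 0))) := h1
  have e2 : ofAdd (toAdd α + l'.getD i 0 - l'.getD i 0) = α := by
    have : toAdd α + l'.getD i 0 - l'.getD i 0 = toAdd α := by ring
    rw [this, ofAdd_toAdd]
  rw [e2] at h2
  have e3 : (ofAdd (l.getD i 0 - l'.getD i 0))⁻¹ * α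
      = ofAdd (toAdd α + l'.getD i 0 - l.getD i 0) := by
    have : toAdd ((ofAdd (l.getD i 0 - l'.getD i 0))⁻¹ * α)
        = toAdd α + l'.getD i 0 - l.getD i 0 := by
      rw [toAdd_mul, toAdd_inv, toAdd_ofAdd]; ring
    exact this
  rw [e3]
  exact h2

variable (a b)

/-- Decoding of a natural number into a list of shifts. -/
def listdec (m : ℕ) : List ℤ := Denumerable.ofNat (List ℤ) m

/-- The reduction witnessing `((E^{[ℤ]})^{<ω})⁺ ≤_B (E^{[ℤ]})⁺`. -/
def redF (w : ℕ → Σ k : ℕ, Fin k → Multiplicative ℤ → X) : ℕ → Multiplicative ℤ → X :=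
  fun n => codeFn a b (tshift (w (Nat.unpair n).1) (listdec (Nat.unpair n).2))

theorem redF_meas [MeasurableSpace X] : Measurable (redF a b (X := X)) := by
  apply measurable_pi_lambda
  intro n
  have heq : (fun w : ℕ → Σ k : ℕ, Fin k → Multiplicative ℤ → X => redF a b w n)
      = (fun t : Σ k : ℕ, Fin k → Multiplicative ℤ → X =>
          codeFn a b (tshift t (listdec (Nat.unpair n).2))) ∘
        (fun w => w (Nat.unpair n).1) := rfl
  rw [heq]
  refine Measurable.comp ?_ (measurable_pi_apply (X := fun _ : ℕ => Σ k : ℕ, Fin k → Multiplicative ℤ → X) (Nat.unpair n).1)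
  apply measurable_of_sigma
  intro k
  apply measurable_pi_lambda
  intro α
  set l : List ℤ := listdec (Nat.unpair n).2 with hl
  show Measurable fun u : Fin k → Multiplicative ℤ → X =>
    codeZ a b k (fun i => sh (l.getD i 0) (u i)) (toAdd α)
  set m : ℤ := toAdd α with hm
  unfold codeZ
  by_cases h1 : m < 0
  · simp only [if_pos h1]; exact measurable_const
  by_cases h2 : m = 0
  · simp only [if_neg h1, if_pos h2]; exact measurable_const
  by_cases h3 : m ≤ (k : ℤ)
  · simp only [if_neg h1, if_neg h2, if_pos h3]; exact measurable_const
  by_cases h4 : m = (k : ℤ) + 1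
  · simp only [if_neg h1, if_neg h2, if_neg h3, if_pos h4]; exact measurable_const
  simp only [if_neg h1, if_neg h2, if_neg h3, if_neg h4]
  cases hd : Encodable.decode (α := Fin k × ℤ) ((m - ((k : ℤ) + 2)).toNat) with
  | none => exact measurable_const
  | some p =>
    obtain ⟨i, q⟩ := p
    show Measurable fun u : Fin k → Multiplicative ℤ → X =>
      u i (ofAdd (toAdd (ofAdd q) - l.getD i 0))
    exact (measurable_pi_apply _).comp (measurable_pi_apply i)

variable {a b}

theorem one_side (hE : Equivalence E) (hab : ¬ E a b)
    {w w' : ℕ → Σ k : ℕ, Fin k → Multiplicative ℤ → X}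
    (h1 : ∀ n, ∃ m, {z | FinSeqRel (GammaJump (Multiplicative ℤ) E) (w n) z}
      = {z | FinSeqRel (GammaJump (Multiplicative ℤ) E) (w' m) z}) :
    ∀ n, ∃ m, {z | GammaJump (Multiplicative ℤ) E (redF a b w n) z}
      = {z | GammaJump (Multiplicative ℤ) E (redF a b w' m) z} := by
  have hJ := gammaJump_equiv (Γ := Multiplicative ℤ) hE
  have hFS := finSeqRel_equiv hJ
  intro n
  obtain ⟨m', hm'⟩ := h1 (Nat.unpair n).1
  have hrel := rel_of_class_eq hFS hm'
  obtain ⟨l', hP⟩ := shift_of_finSeqRel hE hrel (listdec (Nat.unpair n).2)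
  refine ⟨Nat.pair m' (Encodable.encode l'), ?_⟩
  apply class_eq_of_rel hJ
  have hred : redF a b w' (Nat.pair m' (Encodable.encode l'))
      = codeFn a b (tshift (w' m') l') := by
    simp [redF, Nat.unpair_pair, listdec, Denumerable.ofNat_encode]
  rw [hred]
  exact code_of_ptWise hE hP

theorem other_side (hE : Equivalence E) (hab : ¬ E a b)
    {w w' : ℕ → Σ k : ℕ, Fin k → Multiplicative ℤ → X}
    (h1 : ∀ n, ∃ m, {z | GammaJump (Multiplicative ℤ) E (redF a b w n) z}
      = {z | GammaJump (Multiplicative ℤ) E (redF a b w' m) z}) :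
    ∀ n, ∃ m, {z | FinSeqRel (GammaJump (Multiplicative ℤ) E) (w n) z}
      = {z | FinSeqRel (GammaJump (Multiplicative ℤ) E) (w' m) z} := by
  have hJ := gammaJump_equiv (Γ := Multiplicative ℤ) hE
  have hFS := finSeqRel_equiv hJ
  intro m0
  obtain ⟨n', hn'⟩ := h1 (Nat.pair m0 0)
  have hJrel := rel_of_class_eq hJ hn'
  have hred : redF a b w (Nat.pair m0 0)
      = codeFn a b (tshift (w m0) (listdec 0)) := by
    simp [redF, Nat.unpair_pair]
  rw [hred] at hJrel
  have hP := rigid hE hab hJrel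
  have hrel := finSeqRel_of_shift hE hP
  exact ⟨(Nat.unpair n').1, class_eq_of_rel hFS hrel⟩

theorem part2 [MeasurableSpace X] (hE : Equivalence E) (hab : ¬ E a b) :
    BorelReducible (FSJump (FinSeqRel (GammaJump (Multiplicative ℤ) E)))
      (FSJump (GammaJump (Multiplicative ℤ) E)) := by
  refine ⟨redF a b, redF_meas a b, fun w w' => ?_⟩
  rw [fsJump_iff, fsJump_iff]
  constructor
  · rintro ⟨h1, h2⟩
    exact ⟨one_side hE hab h1, one_side hE hab h2⟩
  · rintro ⟨h1, h2⟩
    exact ⟨other_side hE hab h1, other_side hE hab h2⟩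

end Part2

end ZJumpAux

theorem zJump_weakly_absorbing
    {X : Type*} [MeasurableSpace X] [StandardBorelSpace X]
    (E : X → X → Prop) (hE : Equivalence E)
    (hEBorel : MeasurableSet {p : X × X | E p.1 p.2})
    (htwo : ∃ a b : X, ¬ E a b) :
    PerfectlyManyClasses (GammaJump (Multiplicative ℤ) E) ∧
    BorelReducible (FSJump (FinSeqRel (GammaJump (Multiplicative ℤ) E)))
      (FSJump (GammaJump (Multiplicative ℤ) E)) := by
  obtain ⟨a, b, hab⟩ := htwo
  exact ⟨ZJumpAux.part1 hE hab, ZJumpAux.part2 hE hab⟩
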